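/- Let ψ be a Nevanlinna function, Ψ a primitive of -ψ on ℂ⁺ with Ψ univalent, and suppose Ψ(ℂ⁺) contains ℂ⁺. Let Φ : Ψ(ℂ⁺) → ℂ⁺ be the inverse of Ψ. Then for every t ∈ ℝ and z ∈ ℂ⁺, F_t(z) := Ψ(Φ(z) + t) is well defined, the family satisfies F_t ∘ F_s = F_{t+s} on ℂ⁺ for all s, t ∈ ℝ, and F_t solves ∂F_t/∂t + φ(F_t) = 0 with F_0 = id, where φ = ψ ∘ Φ restricted to ℂ⁺. -/

import Mathlib

open Complex Set

/-- the flow F_t(z) = Ψ(Φ(z)+t) is well defined for all real t,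
forms a group under composition and solves ∂F_t/∂t + (ψ∘Φ)(F_t) = 0. -/
theorem flow_of_primitive
    (ψ Ψ Φ : ℂ → ℂ)
    (hψ : DifferentiableOn ℂ ψ {z : ℂ | 0 < z.im})
    (hψim : ∀ z : ℂ, 0 < z.im → (ψ z).im ≤ 0)
    (hΨ : ∀ z : ℂ, 0 < z.im → HasDerivAt Ψ (-(ψ z)) z)
    (hinj : Set.InjOn Ψ {z : ℂ | 0 < z.im})
    (hcont : {z : ℂ | 0 < z.im} ⊆ Ψ '' {z : ℂ | 0 < z.im})
    (hΦ₁ : ∀ z : ℂ, 0 < z.im → Φ (Ψ z) = z)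
    (hΦ₂ : ∀ w ∈ Ψ '' {z : ℂ | 0 < z.im}, Ψ (Φ w) = w ∧ 0 < (Φ w).im) :
    ∀ z : ℂ, 0 < z.im →
      (∀ t : ℝ, Φ z + (t : ℂ) ∈ Ψ '' {z : ℂ | 0 < z.im}) ∧
      Ψ (Φ z + (0 : ℝ)) = z ∧
      (∀ s t : ℝ, Ψ (Φ (Ψ (Φ z + (s : ℂ))) + (t : ℂ)) = Ψ (Φ z + ((s + t : ℝ) : ℂ))) ∧
      (∀ t : ℝ, HasDerivAt (fun t : ℝ => Ψ (Φ z + (t : ℂ)))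
          (-(ψ (Φ (Ψ (Φ z + (t : ℂ)))))) t) := by
  intro z hz
  have hzΦ : 0 < (Φ z).im := (hΦ₂ z (hcont hz)).2
  have hup : ∀ t : ℝ, 0 < (Φ z + (t : ℂ)).im := by
    intro t
    simpa [Complex.add_im] using hzΦ
  refine ⟨fun t => hcont (hup t), ?_, ?_, ?_⟩
  · simpa using (hΦ₂ z (hcont hz)).1
  · intro s t
    have h := hΦ₁ (Φ z + (s : ℂ)) (hup s)
    rw [h]
    push_cast
    ring_nf
  · intro t
    set w : ℂ := Φ z + (t : ℂ) with hw
    have hΦw : Φ (Ψ w) = w := hΦ₁ w (hup t)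
    rw [hΦw]
    -- complex derivative of u ↦ Ψ (Φ z + u) at (t : ℂ)
    have h1 : HasDerivAt (fun u : ℂ => Ψ (Φ z + u)) (-(ψ w)) (t : ℂ) := by
      have hΨ' : HasDerivAt Ψ (-(ψ w)) w := hΨ w (hup t)
      have hadd : HasDerivAt (fun u : ℂ => Φ z + u) 1 (t : ℂ) :=
        (hasDerivAt_id _).const_add (Φ z)
      have h2 := hΨ'.comp (t : ℂ) hadd
      rw [mul_one] at h2
      exact h2
    simpa using h1.comp_ofReal
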